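/- Fix μ > 1 and define δ(T) = (2μ/(μ²+1))·log(((μ²+1)(e^T - 1) + 2)/2) - T for 0 < T ≤ log((μ²+1)/(μ²-1)), and δ(T) = log( (μ-1)(sqrt(e^T+1) + sqrt(e^T-1)) / ((μ+1)(sqrt(e^T+1) - sqrt(e^T-1))) ) + (2μ/(μ²+1))·log(2μ²/(μ²-1)) - T for T ≥ log((μ²+1)/(μ²-1)). Then δ is continuous and strictly increasing on (0, ∞). -/

import Mathlib

noncomputable def deltaFun (μ T : ℝ) : ℝ :=
  if T ≤ Real.log ((μ ^ 2 + 1) / (μ ^ 2 - 1)) then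
    (2 * μ / (μ ^ 2 + 1)) *
        Real.log (((μ ^ 2 + 1) * (Real.exp T - 1) + 2) / 2) - T
  else
    Real.log ((μ - 1) * (Real.sqrt (Real.exp T + 1) + Real.sqrt (Real.exp T - 1)) /
        ((μ + 1) * (Real.sqrt (Real.exp T + 1) - Real.sqrt (Real.exp T - 1)))) +
      (2 * μ / (μ ^ 2 + 1)) * Real.log (2 * μ ^ 2 / (μ ^ 2 - 1)) - T

noncomputable def auxB1 (μ T : ℝ) : ℝ :=
  (2 * μ / (μ ^ 2 + 1)) * Real.log (((μ ^ 2 + 1) * (Real.exp T - 1) + 2) / 2) - T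

noncomputable def auxB2 (μ T : ℝ) : ℝ :=
  Real.log ((μ - 1) * (Real.sqrt (Real.exp T + 1) + Real.sqrt (Real.exp T - 1)) /
      ((μ + 1) * (Real.sqrt (Real.exp T + 1) - Real.sqrt (Real.exp T - 1)))) +
    (2 * μ / (μ ^ 2 + 1)) * Real.log (2 * μ ^ 2 / (μ ^ 2 - 1)) - T

noncomputable def auxG (μ T : ℝ) : ℝ :=
  Real.log ((μ - 1) / (μ + 1)) + Real.log (1 + Real.sqrt (1 - Real.exp (-(2 * T)))) +
    (2 * μ / (μ ^ 2 + 1)) * Real.log (2 * μ ^ 2 / (μ ^ 2 - 1))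

lemma auxB2_eq_G (μ : ℝ) (hμ : 1 < μ) (T : ℝ) (hT : 0 ≤ T) : auxB2 μ T = auxG μ T := by
  have hu1 : 1 ≤ Real.exp T := Real.one_le_exp hT
  set u := Real.exp T with hu
  set A := Real.sqrt (u + 1) with hA
  set B := Real.sqrt (u - 1) with hB
  have hA2 : A ^ 2 = u + 1 := Real.sq_sqrt (by linarith)
  have hB2 : B ^ 2 = u - 1 := Real.sq_sqrt (by linarith)
  have hBA : B < A := Real.sqrt_lt_sqrt (by linarith) (by linarith)
  have hBnn : 0 ≤ B := Real.sqrt_nonneg _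
  have hApos : 0 < A := lt_of_le_of_lt hBnn hBA
  have hupos : (0:ℝ) < u := Real.exp_pos T
  -- e^{-2T} fact
  have he : u ^ 2 * Real.exp (-(2 * T)) = 1 := by
    rw [hu, sq, ← Real.exp_add, ← Real.exp_add]
    rw [show T + T + -(2 * T) = 0 by ring, Real.exp_zero]
  have hu2 : 1 ≤ u ^ 2 := by nlinarith
  have he' : Real.exp (-(2 * T)) = 1 / u ^ 2 := by
    field_simp
    linear_combination he
  have hxnn : 0 ≤ 1 - Real.exp (-(2 * T)) := by
    rw [he', sub_nonneg, div_le_one (by positivity)]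
    exact hu2
  set x := Real.sqrt (1 - Real.exp (-(2 * T))) with hx
  have hux : u * x = Real.sqrt (u ^ 2 * (1 - Real.exp (-(2 * T)))) := by
    rw [Real.sqrt_mul (sq_nonneg u), Real.sqrt_sq hupos.le]
  have hxAB : A * B = u * x := by
    rw [hA, hB, ← Real.sqrt_mul (by linarith : (0:ℝ) ≤ u + 1), hux]
    congr 1
    linear_combination he
  -- key ratio identity
  have hABne : A - B ≠ 0 := by linarith
  have hratio : (A + B) / (A - B) = u * (1 + x) := by
    rw [div_eq_iff hABne]
    have : u * (1 + x) = u + A * B := by rw [hxAB]; ring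
    rw [this]
    linear_combination (-B) * hA2 + A * hB2
  have hxnn' : (0:ℝ) ≤ x := Real.sqrt_nonneg _
  have harg : (μ - 1) * (A + B) / ((μ + 1) * (A - B))
      = ((μ - 1) / (μ + 1)) * (u * (1 + x)) := by
    rw [← hratio]
    field_simp
  have h1 : (μ - 1) / (μ + 1) ≠ 0 := ne_of_gt (div_pos (by linarith) (by linarith))
  have h2 : u * (1 + x) ≠ 0 := by positivity
  have h3 : (1 : ℝ) + x ≠ 0 := by positivity
  rw [auxB2, auxG, harg, Real.log_mul h1 h2, Real.log_mul (ne_of_gt hupos) h3, hu, Real.log_exp]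
  ring

section
variable (μ : ℝ)

lemma auxT0_pos (hμ : 1 < μ) : 0 < Real.log ((μ ^ 2 + 1) / (μ ^ 2 - 1)) := by
  apply Real.log_pos
  rw [lt_div_iff₀ (by nlinarith)]
  nlinarith

lemma auxexpT0 (hμ : 1 < μ) :
    Real.exp (Real.log ((μ ^ 2 + 1) / (μ ^ 2 - 1))) = (μ ^ 2 + 1) / (μ ^ 2 - 1) :=
  Real.exp_log (div_pos (by nlinarith) (by nlinarith))

lemma auxB1_T0 (hμ : 1 < μ) :
    auxB1 μ (Real.log ((μ ^ 2 + 1) / (μ ^ 2 - 1))) =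
      (2 * μ / (μ ^ 2 + 1)) * Real.log (2 * μ ^ 2 / (μ ^ 2 - 1)) -
        Real.log ((μ ^ 2 + 1) / (μ ^ 2 - 1)) := by
  have h1 : (0:ℝ) < μ ^ 2 - 1 := by nlinarith
  have heq : ((μ ^ 2 + 1) * ((μ ^ 2 + 1) / (μ ^ 2 - 1) - 1) + 2) / 2 = 2 * μ ^ 2 / (μ ^ 2 - 1) := by
    field_simp
    ring
  rw [auxB1, auxexpT0 μ hμ, heq]

lemma auxG_T0 (hμ : 1 < μ) :
    auxG μ (Real.log ((μ ^ 2 + 1) / (μ ^ 2 - 1))) =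
      (2 * μ / (μ ^ 2 + 1)) * Real.log (2 * μ ^ 2 / (μ ^ 2 - 1)) -
        Real.log ((μ ^ 2 + 1) / (μ ^ 2 - 1)) := by
  have h1 : (0:ℝ) < μ ^ 2 - 1 := by nlinarith
  have h2 : (0:ℝ) < μ ^ 2 + 1 := by nlinarith
  set T0 := Real.log ((μ ^ 2 + 1) / (μ ^ 2 - 1)) with hT0
  have hexp : Real.exp (-(2 * T0)) = ((μ ^ 2 - 1) / (μ ^ 2 + 1)) ^ 2 := by
    rw [show -(2 * T0) = -T0 + -T0 by ring, Real.exp_add, Real.exp_neg, auxexpT0 μ hμ]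
    rw [inv_div]
    ring
  have hsq : 1 - Real.exp (-(2 * T0)) = (2 * μ / (μ ^ 2 + 1)) ^ 2 := by
    rw [hexp]
    field_simp
    ring
  have hμ0 : (0:ℝ) < 2 * μ / (μ ^ 2 + 1) := by positivity
  have hss : Real.sqrt (1 - Real.exp (-(2 * T0))) = 2 * μ / (μ ^ 2 + 1) := by
    rw [hsq, Real.sqrt_sq hμ0.le]
  rw [auxG, hss]
  have h3 : (1 : ℝ) + 2 * μ / (μ ^ 2 + 1) = (μ + 1) ^ 2 / (μ ^ 2 + 1) := by
    field_simp
    ring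
  rw [h3]
  have h4 : (μ - 1) / (μ + 1) ≠ 0 := ne_of_gt (div_pos (by linarith) (by linarith))
  have h5 : (μ + 1) ^ 2 / (μ ^ 2 + 1) ≠ 0 := by positivity
  rw [← Real.log_mul h4 h5]
  have h6 : (μ - 1) / (μ + 1) * ((μ + 1) ^ 2 / (μ ^ 2 + 1)) = ((μ ^ 2 + 1) / (μ ^ 2 - 1))⁻¹ := by
    field_simp
    ring
  rw [h6, Real.log_inv, hT0]
  ring

end

lemma auxB1_hasDeriv (μ x : ℝ) (hμ : 1 < μ) (hx : 0 < x) :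
    HasDerivAt (auxB1 μ)
      ((2 * μ / (μ ^ 2 + 1)) *
        ((μ ^ 2 + 1) * Real.exp x / ((μ ^ 2 + 1) * (Real.exp x - 1) + 2)) - 1) x := by
  have hex : 1 < Real.exp x := Real.one_lt_exp_iff.mpr hx
  have hDpos : 0 < (μ ^ 2 + 1) * (Real.exp x - 1) + 2 := by nlinarith
  have h1 : HasDerivAt (fun T => ((μ ^ 2 + 1) * (Real.exp T - 1) + 2) / 2)
      ((μ ^ 2 + 1) * Real.exp x / 2) x := by
    have := ((Real.hasDerivAt_exp x).sub_const 1).const_mul (μ ^ 2 + 1)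
    exact (this.add_const 2).div_const 2
  have h2 := (h1.log (by positivity)).const_mul (2 * μ / (μ ^ 2 + 1))
  have h3 := h2.sub (hasDerivAt_id x)
  refine h3.congr_deriv ?_
  rw [div_div_div_cancel_right₀ (two_ne_zero' ℝ)]

lemma auxB1_mono (μ : ℝ) (hμ : 1 < μ) :
    StrictMonoOn (auxB1 μ) (Set.Icc 0 (Real.log ((μ ^ 2 + 1) / (μ ^ 2 - 1)))) := by
  have h1 : (0:ℝ) < μ ^ 2 - 1 := by nlinarith
  set T0 := Real.log ((μ ^ 2 + 1) / (μ ^ 2 - 1)) with hT0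
  have hcont : ContinuousOn (auxB1 μ) (Set.Icc 0 T0) := by
    apply ContinuousOn.sub _ continuousOn_id
    apply ContinuousOn.mul continuousOn_const
    apply ContinuousOn.log
    · fun_prop
    · intro x hx
      have h2 : 1 ≤ Real.exp x := Real.one_le_exp hx.1
      have : (0:ℝ) < ((μ ^ 2 + 1) * (Real.exp x - 1) + 2) / 2 := by nlinarith [sq_nonneg μ]
      exact ne_of_gt this
  apply strictMonoOn_of_deriv_pos (convex_Icc _ _) hcont
  intro x hx
  rw [interior_Icc] at hx
  rw [(auxB1_hasDeriv μ x hμ hx.1).deriv]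
  have hex : 1 < Real.exp x := Real.one_lt_exp_iff.mpr hx.1
  have hDpos : 0 < (μ ^ 2 + 1) * (Real.exp x - 1) + 2 := by nlinarith
  rw [sub_pos]
  have hlt : Real.exp x < (μ ^ 2 + 1) / (μ ^ 2 - 1) := by
    calc Real.exp x < Real.exp T0 := Real.exp_lt_exp.mpr hx.2
    _ = (μ ^ 2 + 1) / (μ ^ 2 - 1) := auxexpT0 μ hμ
  have hlt' : Real.exp x * (μ ^ 2 - 1) < μ ^ 2 + 1 := by
    rwa [← lt_div_iff₀ h1]
  rw [show (2 * μ / (μ ^ 2 + 1)) * ((μ ^ 2 + 1) * Real.exp x / ((μ ^ 2 + 1) * (Real.exp x - 1) + 2))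
      = (2 * μ * Real.exp x) / ((μ ^ 2 + 1) * (Real.exp x - 1) + 2) by
    field_simp]
  rw [lt_div_iff₀ hDpos, one_mul]
  nlinarith [Real.exp_pos x]

lemma auxG_mono (μ : ℝ) : StrictMonoOn (auxG μ) (Set.Ici 0) := by
  intro s hs t ht hst
  unfold auxG
  have h1 : Real.exp (-(2 * t)) < Real.exp (-(2 * s)) := Real.exp_lt_exp.mpr (by linarith)
  have h2 : Real.exp (-(2 * s)) ≤ 1 := Real.exp_le_one_iff.mpr (by simp at hs ⊢; linarith)
  have h3 : Real.sqrt (1 - Real.exp (-(2 * s))) < Real.sqrt (1 - Real.exp (-(2 * t))) :=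
    Real.sqrt_lt_sqrt (by linarith) (by linarith)
  have h4 : (0:ℝ) < 1 + Real.sqrt (1 - Real.exp (-(2 * s))) := by
    have := Real.sqrt_nonneg (1 - Real.exp (-(2 * s))); linarith
  have h5 : Real.log (1 + Real.sqrt (1 - Real.exp (-(2 * s)))) <
      Real.log (1 + Real.sqrt (1 - Real.exp (-(2 * t)))) :=
    Real.log_lt_log h4 (by linarith)
  linarith

lemma auxG_cont (μ : ℝ) : Continuous (auxG μ) := by
  unfold auxG
  have hc : Continuous fun T : ℝ => 1 + Real.sqrt (1 - Real.exp (-(2 * T))) := by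
    apply continuous_const.add
    apply Continuous.sqrt
    exact continuous_const.sub (Real.continuous_exp.comp (by fun_prop))
  exact (continuous_const.add (hc.log fun x => by positivity)).add continuous_const

lemma auxB1_contAt (μ x : ℝ) (hμ : 1 < μ) (hx : 0 ≤ x) : ContinuousAt (auxB1 μ) x := by
  unfold auxB1
  have hin : ContinuousAt (fun T : ℝ => ((μ ^ 2 + 1) * (Real.exp T - 1) + 2) / 2) x := by
    fun_prop
  have hex : 1 ≤ Real.exp x := Real.one_le_exp hx
  have hne : ((μ ^ 2 + 1) * (Real.exp x - 1) + 2) / 2 ≠ 0 := by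
    have : (0:ℝ) < ((μ ^ 2 + 1) * (Real.exp x - 1) + 2) / 2 := by nlinarith [sq_nonneg μ]
    exact ne_of_gt this
  exact (continuousAt_const.mul (hin.log hne)).sub continuousAt_id

theorem stmt11 (μ : ℝ) (hμ : 1 < μ) :
    ContinuousOn (deltaFun μ) (Set.Ioi 0) ∧
      StrictMonoOn (deltaFun μ) (Set.Ioi 0) := by
  have h1 : (0:ℝ) < μ ^ 2 - 1 := by nlinarith
  set T0 := Real.log ((μ ^ 2 + 1) / (μ ^ 2 - 1)) with hT0def
  have hT0 : 0 < T0 := auxT0_pos μ hμ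
  have hrfl : ∀ T, deltaFun μ T = if T ≤ T0 then auxB1 μ T else auxB2 μ T := fun T => rfl
  have hBG : auxB1 μ T0 = auxG μ T0 := by rw [auxB1_T0 μ hμ, auxG_T0 μ hμ]
  have hEq1 : ∀ T ∈ Set.Ioc 0 T0, deltaFun μ T = auxB1 μ T := fun T hT => by
    rw [hrfl, if_pos hT.2]
  have hEq2 : ∀ T ∈ Set.Ici T0, deltaFun μ T = auxG μ T := by
    intro T hT
    rcases eq_or_lt_of_le (Set.mem_Ici.mp hT) with h | h
    · rw [← h, hrfl, if_pos le_rfl, hBG]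
    · rw [hrfl, if_neg (not_le.mpr h), auxB2_eq_G μ hμ T (le_of_lt (lt_trans hT0 h))]
  constructor
  · -- continuity
    intro x hx
    have hx' : 0 < x := hx
    rcases lt_trichotomy x T0 with h | h | h
    · have hev : auxB1 μ =ᶠ[nhds x] deltaFun μ := by
        filter_upwards [Ioo_mem_nhds hx' h] with y hy
        exact (hEq1 y ⟨hy.1, hy.2.le⟩).symm
      exact ((auxB1_contAt μ x hμ hx'.le).congr hev).continuousWithinAt
    · have c1 : ContinuousWithinAt (deltaFun μ) (Set.Ioc 0 T0) x := by
        apply ((auxB1_contAt μ x hμ hx'.le).continuousWithinAt).congr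
        · exact fun y hy => hEq1 y hy
        · exact hEq1 x ⟨hx', h.le⟩
      have c2 : ContinuousWithinAt (deltaFun μ) (Set.Ici T0) x := by
        apply ((auxG_cont μ).continuousAt.continuousWithinAt).congr
        · exact fun y hy => hEq2 y hy
        · exact hEq2 x (Set.mem_Ici.mpr h.ge)
      refine (c1.union c2).mono ?_
      intro y hy
      rcases le_or_gt y T0 with h2 | h2
      · exact Or.inl ⟨hy, h2⟩
      · exact Or.inr h2.le
    · have hev : auxG μ =ᶠ[nhds x] deltaFun μ := by
        filter_upwards [Ioi_mem_nhds h] with y hy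
        exact (hEq2 y (Set.mem_Ici.mpr hy.le)).symm
      exact (((auxG_cont μ).continuousAt).congr hev).continuousWithinAt
  · -- strict monotonicity
    intro s hs t ht hst
    have hs' : 0 < s := hs
    have ht' : 0 < t := ht
    rcases le_or_gt t T0 with h | h
    · rw [hEq1 s ⟨hs', hst.le.trans h⟩, hEq1 t ⟨ht', h⟩]
      exact auxB1_mono μ hμ ⟨hs'.le, hst.le.trans h⟩ ⟨ht'.le, h⟩ hst
    · rcases le_or_gt s T0 with h2 | h2
      · rw [hEq1 s ⟨hs', h2⟩, hEq2 t (Set.mem_Ici.mpr h.le)]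
        calc auxB1 μ s ≤ auxB1 μ T0 :=
              (auxB1_mono μ hμ).monotoneOn ⟨hs'.le, h2⟩ ⟨hT0.le, le_rfl⟩ h2
          _ = auxG μ T0 := hBG
          _ < auxG μ t := auxG_mono μ (Set.mem_Ici.mpr hT0.le) (Set.mem_Ici.mpr ht'.le) h
      · rw [hEq2 s (Set.mem_Ici.mpr h2.le), hEq2 t (Set.mem_Ici.mpr (h2.trans hst).le)]
        exact auxG_mono μ (Set.mem_Ici.mpr hs'.le) (Set.mem_Ici.mpr ht'.le) hst
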